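/- Let p(t) be a univariate real polynomial of degree at most d. Then p(t) ≥ 0 for all t ∈ [−1,1] if and only if there exist polynomials f and h, each a sum of squares of polynomials, with deg f ≤ 2d and deg h ≤ 2d − 2, such that p(t) = f(t) + (1 − t)(1 + t)h(t) for all t. -/

import Mathlib

open Polynomial

lemma fml_mul_self_mul {R : Type*} [CommRing R] {s : R} (hs : IsSumSq s) (a : R) :
    IsSumSq (a * a * s) := by
  induction hs with
  | zero => simpa using IsSumSq.zero
  | @sq_add b S pS ih =>
      have : a * a * (b * b + S) = (a * b) * (a * b) + a * a * S := by ring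
      rw [this]; exact IsSumSq.sq_add _ ih

lemma fml_C_mul {c : ℝ} (hc : 0 ≤ c) {s : Polynomial ℝ} (hs : IsSumSq s) :
    IsSumSq (C c * s) := by
  have : C c = C (Real.sqrt c) * C (Real.sqrt c) := by
    rw [← C_mul, Real.mul_self_sqrt hc]
  rw [this]; exact fml_mul_self_mul hs _

lemma fml_C_isSumSq {c : ℝ} (hc : 0 ≤ c) : IsSumSq (C c : Polynomial ℝ) := by
  have := IsSumSq.sq_add (C (Real.sqrt c)) (IsSumSq.zero (R := Polynomial ℝ))
  simpa [← C_mul, Real.mul_self_sqrt hc] using this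

lemma fml_eval_nonneg {s : Polynomial ℝ} (hs : IsSumSq s) (t : ℝ) : 0 ≤ s.eval t := by
  induction hs with
  | zero => simp
  | @sq_add a S pS ih =>
      simp only [eval_add, eval_mul]
      exact add_nonneg (mul_self_nonneg _) ih

lemma fml_closure {q : Polynomial ℝ} {s : Set ℝ} (h : ∀ t ∈ s, 0 ≤ q.eval t) :
    ∀ t ∈ closure s, 0 ≤ q.eval t :=
  fun _ ht => closure_minimal h (isClosed_le continuous_const q.continuous) ht

lemma fml_half (a b : Polynomial ℝ) (h : 2 * a = b) : a = C (1/2) * b := by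
  rw [← h, (map_ofNat C 2).symm, ← mul_assoc, ← C_mul]
  norm_num

lemma fml_natDegree_one_sub_X : (1 - X : Polynomial ℝ).natDegree ≤ 1 := by
  simpa using natDegree_sub_le (1 : Polynomial ℝ) X

lemma fml_natDegree_one_add_X : (1 + X : Polynomial ℝ).natDegree ≤ 1 := by
  simpa using natDegree_add_le (1 : Polynomial ℝ) X

lemma fml_natDegree_w : ((1 - X) * (1 + X) : Polynomial ℝ).natDegree ≤ 2 :=
  le_trans (natDegree_mul_le) (by
    have := fml_natDegree_one_sub_X
    have := fml_natDegree_one_add_X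
    omega)

/-- The key multiplication step for a linear factor `l` satisfying `2l = l² + (1-X)(1+X)`. -/
lemma fml_lin_step (n : ℕ) (l f h : Polynomial ℝ) (hl : l.natDegree ≤ 1)
    (hid : 2 * l = l * l + (1 - X) * (1 + X))
    (hf : IsSumSq f) (hh : IsSumSq h) (hfd : f.natDegree ≤ 2 * n)
    (hhd : h = 0 ∨ h.natDegree + 2 ≤ 2 * n) :
    ∃ F H : Polynomial ℝ, IsSumSq F ∧ IsSumSq H ∧ F.natDegree ≤ 2 * (n + 1) ∧
      (H = 0 ∨ H.natDegree + 2 ≤ 2 * (n + 1)) ∧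
      l * (f + (1 - X) * (1 + X) * h) = F + (1 - X) * (1 + X) * H := by
  set w : Polynomial ℝ := (1 - X) * (1 + X) with hw
  have hw2 : w.natDegree ≤ 2 := fml_natDegree_w
  refine ⟨C (1/2) * (l * l * f + w * w * h), C (1/2) * (f + l * l * h), ?_, ?_, ?_, ?_, ?_⟩
  · exact fml_C_mul (by norm_num) ((fml_mul_self_mul hf l).add (fml_mul_self_mul hh w))
  · exact fml_C_mul (by norm_num) (hf.add (fml_mul_self_mul hh l))
  · refine le_trans (natDegree_C_mul_le _ _) (le_trans (natDegree_add_le _ _) ?_)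
    have h1 : (l * l * f).natDegree ≤ 2 * n + 2 := by
      have := natDegree_mul_le (p := l * l) (q := f)
      have := natDegree_mul_le (p := l) (q := l)
      omega
    have h2 : (w * w * h).natDegree ≤ 2 * n + 2 := by
      rcases hhd with rfl | hhd
      · simp
      · have := natDegree_mul_le (p := w * w) (q := h)
        have := natDegree_mul_le (p := w) (q := w)
        omega
    omega
  · right
    have hb : (C (1/2) * (f + l * l * h)).natDegree ≤ 2 * n := by
      refine le_trans (natDegree_C_mul_le _ _) (le_trans (natDegree_add_le _ _) ?_)
      have hc : (l * l * h).natDegree ≤ 2 * n := by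
        rcases hhd with rfl | hhd
        · simp
        · have := natDegree_mul_le (p := l * l) (q := h)
          have := natDegree_mul_le (p := l) (q := l)
          omega
      omega
    omega
  · have key : 2 * (l * (f + w * h)) = (l * l * f + w * w * h) + w * (f + l * l * h) := by
      linear_combination (f + w * h) * hid
    have := fml_half _ _ key
    rw [this]; ring

/-- Main induction. -/
lemma fml_main : ∀ N : ℕ, ∀ p : Polynomial ℝ, p.natDegree ≤ N →
    (∀ t ∈ Set.Icc (-1:ℝ) 1, 0 ≤ p.eval t) →
    ∃ f h : Polynomial ℝ, IsSumSq f ∧ IsSumSq h ∧ f.natDegree ≤ 2 * N ∧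
      (h = 0 ∨ h.natDegree + 2 ≤ 2 * N) ∧ p = f + (1 - X) * (1 + X) * h := by
  intro N
  induction N using Nat.strong_induction_on with
  | _ N IH =>
  intro p hdeg hpos
  match N, IH with
  | 0, IH =>
    have hpc : p = C (p.coeff 0) := Polynomial.eq_C_of_natDegree_le_zero hdeg
    have hc : 0 ≤ p.coeff 0 := by
      have := hpos 0 (by norm_num)
      rwa [hpc, eval_C] at this
    exact ⟨C (p.coeff 0), 0, fml_C_isSumSq hc, IsSumSq.zero, by simp, Or.inl rfl, by
      rw [← hpc]; ring⟩
  | (n+1), IH =>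
  by_cases hd : p.natDegree ≤ n
  · obtain ⟨f, h, h1, h2, h3, h4, h5⟩ := IH n (Nat.lt_succ_self n) p hd hpos
    exact ⟨f, h, h1, h2, h3.trans (by omega), h4.imp id (fun x => by omega), h5⟩
  push_neg at hd
  have hdp : p.natDegree = n + 1 := le_antisymm hdeg hd
  -- minimum of p on [-1,1]
  obtain ⟨t0, ht0, hmin⟩ := (isCompact_Icc (a := (-1:ℝ)) (b := 1)).exists_isMinOn
    ⟨0, by norm_num⟩ (p.continuous.continuousOn)
  set m := p.eval t0 with hm
  have hm0 : 0 ≤ m := hpos t0 ht0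
  set q : Polynomial ℝ := p - C m with hqdef
  have hq0 : ∀ t ∈ Set.Icc (-1:ℝ) 1, 0 ≤ q.eval t := by
    intro t ht
    have := isMinOn_iff.mp hmin t ht
    simp only [hqdef, eval_sub, eval_C]
    linarith
  have hqt0 : q.eval t0 = 0 := by simp [hqdef, hm]
  have hqdeg : q.natDegree = n + 1 := by rw [hqdef, natDegree_sub_C, hdp]
  have hqne : q ≠ 0 := by
    intro h0
    rw [h0, natDegree_zero] at hqdeg
    exact Nat.succ_ne_zero n hqdeg.symm
  -- it suffices to represent q
  have final : (∃ f h : Polynomial ℝ, IsSumSq f ∧ IsSumSq h ∧ f.natDegree ≤ 2 * (n+1) ∧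
      (h = 0 ∨ h.natDegree + 2 ≤ 2 * (n+1)) ∧ q = f + (1 - X) * (1 + X) * h) →
      ∃ f h : Polynomial ℝ, IsSumSq f ∧ IsSumSq h ∧ f.natDegree ≤ 2 * (n+1) ∧
      (h = 0 ∨ h.natDegree + 2 ≤ 2 * (n+1)) ∧ p = f + (1 - X) * (1 + X) * h := by
    rintro ⟨f, h, h1, h2, h3, h4, h5⟩
    refine ⟨f + C m, h, h1.add (fml_C_isSumSq hm0), h2, ?_, h4, ?_⟩
    · refine le_trans (natDegree_add_le _ _) ?_
      have : (C m).natDegree = 0 := natDegree_C m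
      omega
    · have : p = q + C m := by rw [hqdef]; ring
      rw [this, h5]; ring
  apply final
  -- cases on where the minimum is attained
  rcases ht0 with ⟨hl, hr⟩
  rcases eq_or_lt_of_le hr with h1 | h1
  · -- t0 = 1 : (1 - X) divides q
    have hroot : IsRoot q 1 := by rwa [IsRoot, ← h1]
    obtain ⟨r, hr'⟩ := (dvd_iff_isRoot).mpr hroot
    set q' : Polynomial ℝ := -r with hq'def
    have hflip : (1 - X : Polynomial ℝ) = -(X - C 1) := by rw [C_1]; ring
    have hq' : q = (1 - X) * q' := by rw [hr', hq'def, hflip, C_1]; ring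
    have hq'ne : q' ≠ 0 := by
      intro h0; rw [h0, mul_zero] at hq'; exact hqne hq'
    have h1X : (1 - X : Polynomial ℝ) ≠ 0 := by
      rw [hflip]; exact neg_ne_zero.mpr (X_sub_C_ne_zero 1)
    have hq'deg : q'.natDegree ≤ n := by
      have := natDegree_mul (p := (1 - X : Polynomial ℝ)) (q := q') h1X hq'ne
      have hx : (1 - X : Polynomial ℝ).natDegree = 1 := by
        rw [hflip, natDegree_neg, natDegree_X_sub_C]
      rw [← hq'] at this
      omega
    have hq'nonneg : ∀ t ∈ Set.Icc (-1:ℝ) 1, 0 ≤ q'.eval t := by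
      have hsub : ∀ t ∈ Set.Ico (-1:ℝ) 1, 0 ≤ q'.eval t := by
        intro t ht
        have hpos1 : (0:ℝ) < 1 - t := by linarith [ht.2]
        have h2 := hq0 t (Set.Ico_subset_Icc_self ht)
        rw [hq'] at h2
        simp only [eval_mul, eval_sub, eval_one, eval_X] at h2
        exact (mul_nonneg_iff_of_pos_left hpos1).mp h2
      intro t ht
      exact fml_closure hsub t (by rw [closure_Ico (by norm_num : (-1:ℝ) ≠ 1)]; exact ht)
    obtain ⟨f, h, hf1, hf2, hf3, hf4, hf5⟩ := IH n (Nat.lt_succ_self n) q' hq'deg hq'nonneg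
    obtain ⟨F, H, hF1, hF2, hF3, hF4, hF5⟩ :=
      fml_lin_step n (1 - X) f h fml_natDegree_one_sub_X (by ring) hf1 hf2 hf3 hf4
    exact ⟨F, H, hF1, hF2, hF3, hF4, by rw [hq', hf5, hF5]⟩
  rcases eq_or_lt_of_le hl with h2 | h2
  · -- t0 = -1 : (1 + X) divides q
    have hroot : IsRoot q (-1) := by rwa [IsRoot, h2]
    obtain ⟨q', hr'⟩ := (dvd_iff_isRoot).mpr hroot
    have hflip : (1 + X : Polynomial ℝ) = X - C (-1) := by rw [map_neg, C_1]; ring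
    have hq' : q = (1 + X) * q' := by rw [hr', hflip]
    have hq'ne : q' ≠ 0 := by
      intro h0; rw [h0, mul_zero] at hq'; exact hqne hq'
    have h1X : (1 + X : Polynomial ℝ) ≠ 0 := by
      rw [hflip]; exact X_sub_C_ne_zero (-1)
    have hq'deg : q'.natDegree ≤ n := by
      have := natDegree_mul (p := (1 + X : Polynomial ℝ)) (q := q') h1X hq'ne
      have hx : (1 + X : Polynomial ℝ).natDegree = 1 := by
        rw [hflip, natDegree_X_sub_C]
      rw [← hq'] at this
      omega
    have hq'nonneg : ∀ t ∈ Set.Icc (-1:ℝ) 1, 0 ≤ q'.eval t := by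
      have hsub : ∀ t ∈ Set.Ioc (-1:ℝ) 1, 0 ≤ q'.eval t := by
        intro t ht
        have hpos1 : (0:ℝ) < 1 + t := by linarith [ht.1]
        have h2' := hq0 t (Set.Ioc_subset_Icc_self ht)
        rw [hq'] at h2'
        simp only [eval_mul, eval_add, eval_one, eval_X] at h2'
        exact (mul_nonneg_iff_of_pos_left hpos1).mp h2'
      intro t ht
      exact fml_closure hsub t (by rw [closure_Ioc (by norm_num : (-1:ℝ) ≠ 1)]; exact ht)
    obtain ⟨f, h, hf1, hf2, hf3, hf4, hf5⟩ := IH n (Nat.lt_succ_self n) q' hq'deg hq'nonneg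
    obtain ⟨F, H, hF1, hF2, hF3, hF4, hF5⟩ :=
      fml_lin_step n (1 + X) f h fml_natDegree_one_add_X (by ring) hf1 hf2 hf3 hf4
    exact ⟨F, H, hF1, hF2, hF3, hF4, by rw [hq', hf5, hF5]⟩
  · -- t0 ∈ (-1, 1) : (X - t0)² divides q
    obtain ⟨r, hr', hndvd⟩ := q.exists_eq_pow_rootMultiplicity_mul_and_not_dvd hqne t0
    set k := q.rootMultiplicity t0 with hk
    have hrt0 : r.eval t0 ≠ 0 := fun h0 => hndvd ((dvd_iff_isRoot).mpr h0)
    have hk1 : 1 ≤ k := (rootMultiplicity_pos hqne).mpr hqt0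
    have hkeven : Even k := by
      by_contra hodd
      rw [Nat.not_even_iff_odd] at hodd
      rcases lt_or_gt_of_ne hrt0 with hneg | hpos
      · -- r(t0) < 0 : take t slightly above t0
        have hU : IsOpen ({t : ℝ | r.eval t < 0} ∩ Set.Ioo (-1:ℝ) 1) :=
          (isOpen_lt r.continuous continuous_const).inter isOpen_Ioo
        have ht0U : t0 ∈ {t : ℝ | r.eval t < 0} ∩ Set.Ioo (-1:ℝ) 1 :=
          ⟨hneg, h2, h1⟩
        obtain ⟨ε, hε, hball⟩ := Metric.isOpen_iff.mp hU t0 ht0U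
        have htb : t0 + ε/2 ∈ {t : ℝ | r.eval t < 0} ∩ Set.Ioo (-1:ℝ) 1 := by
          apply hball
          rw [Metric.mem_ball, Real.dist_eq]
          rw [show t0 + ε/2 - t0 = ε/2 by ring, abs_of_pos (by linarith)]
          linarith
        have hqneg : q.eval (t0 + ε/2) < 0 := by
          rw [hr', eval_mul, eval_pow, eval_sub, eval_X, eval_C]
          have hp1 : (0:ℝ) < (t0 + ε/2 - t0) ^ k := by
            apply pow_pos; linarith
          exact mul_neg_of_pos_of_neg hp1 htb.1
        have := hq0 (t0 + ε/2) ⟨by linarith [htb.2.1], le_of_lt htb.2.2⟩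
        linarith
      · -- r(t0) > 0 : take t slightly below t0
        have hU : IsOpen ({t : ℝ | 0 < r.eval t} ∩ Set.Ioo (-1:ℝ) 1) :=
          (isOpen_lt continuous_const r.continuous).inter isOpen_Ioo
        have ht0U : t0 ∈ {t : ℝ | 0 < r.eval t} ∩ Set.Ioo (-1:ℝ) 1 :=
          ⟨hpos, h2, h1⟩
        obtain ⟨ε, hε, hball⟩ := Metric.isOpen_iff.mp hU t0 ht0U
        have htb : t0 - ε/2 ∈ {t : ℝ | 0 < r.eval t} ∩ Set.Ioo (-1:ℝ) 1 := by
          apply hball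
          rw [Metric.mem_ball, Real.dist_eq]
          rw [show t0 - ε/2 - t0 = -(ε/2) by ring, abs_neg, abs_of_pos (by linarith)]
          linarith
        have hqneg : q.eval (t0 - ε/2) < 0 := by
          rw [hr', eval_mul, eval_pow, eval_sub, eval_X, eval_C]
          have hp1 : (t0 - ε/2 - t0) ^ k < 0 := by
            apply Odd.pow_neg hodd; linarith
          exact mul_neg_of_neg_of_pos hp1 htb.1
        have := hq0 (t0 - ε/2) ⟨le_of_lt htb.2.1, by linarith [htb.2.2]⟩
        linarith
    have hk2 : 2 ≤ k := by
      rcases hkeven with ⟨j, hj⟩; omega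
    set q' : Polynomial ℝ := (X - C t0) ^ (k - 2) * r with hq'def
    have hq' : q = (X - C t0) ^ 2 * q' := by
      rw [hr', hq'def, ← mul_assoc, ← pow_add]
      congr 2
      omega
    have hrne : r ≠ 0 := fun h0 => hrt0 (by rw [h0]; simp)
    have hq'ne : q' ≠ 0 := mul_ne_zero (pow_ne_zero _ (X_sub_C_ne_zero t0)) hrne
    have hXC : ((X - C t0 : Polynomial ℝ) ^ 2).natDegree = 2 := by
      rw [natDegree_pow, natDegree_X_sub_C]
    have hdegsum : 2 + q'.natDegree = n + 1 := by
      have := natDegree_mul (p := ((X - C t0 : Polynomial ℝ)) ^ 2) (q := q')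
        (pow_ne_zero _ (X_sub_C_ne_zero t0)) hq'ne
      rw [← hq', hXC] at this
      omega
    have hn1 : 1 ≤ n := by omega
    have hq'deg : q'.natDegree ≤ n - 1 := by omega
    have hq'nonneg : ∀ t ∈ Set.Icc (-1:ℝ) 1, 0 ≤ q'.eval t := by
      have hsub : ∀ t ∈ (Set.Icc (-1:ℝ) 1) \ {t0}, 0 ≤ q'.eval t := by
        rintro t ⟨htI, htne⟩
        have htne' : t - t0 ≠ 0 := fun h0 => htne (by simpa [sub_eq_zero] using h0)
        have hp2 : (0:ℝ) < (t - t0) ^ 2 := pow_two_pos_of_ne_zero htne'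
        have h3 := hq0 t htI
        rw [hq'] at h3
        simp only [eval_mul, eval_pow, eval_sub, eval_X, eval_C] at h3
        exact (mul_nonneg_iff_of_pos_left hp2).mp h3
      intro t ht
      apply fml_closure hsub t
      have hsub2 : Set.Ico (-1:ℝ) t0 ∪ Set.Ioc t0 1 ⊆ (Set.Icc (-1:ℝ) 1) \ {t0} := by
        rintro x (⟨hx1, hx2⟩ | ⟨hx1, hx2⟩)
        · exact ⟨⟨hx1, le_of_lt (lt_trans hx2 h1)⟩, ne_of_lt hx2⟩
        · exact ⟨⟨le_of_lt (lt_trans h2 hx1), hx2⟩, (ne_of_gt hx1)⟩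
      have hcl : Set.Icc (-1:ℝ) t0 ∪ Set.Icc t0 1 ⊆ closure ((Set.Icc (-1:ℝ) 1) \ {t0}) := by
        have := closure_mono hsub2
        rw [closure_union, closure_Ico (ne_of_lt h2), closure_Ioc (ne_of_lt h1)] at this
        exact this
      apply hcl
      rcases le_total t t0 with hle | hle
      · exact Or.inl ⟨ht.1, hle⟩
      · exact Or.inr ⟨hle, ht.2⟩
    obtain ⟨f, h, hf1, hf2, hf3, hf4, hf5⟩ :=
      IH (n - 1) (by omega) q' hq'deg hq'nonneg
    refine ⟨(X - C t0) * (X - C t0) * f, (X - C t0) * (X - C t0) * h,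
      fml_mul_self_mul hf1 _, fml_mul_self_mul hf2 _, ?_, ?_, ?_⟩
    · have := natDegree_mul_le (p := (X - C t0 : Polynomial ℝ) * (X - C t0)) (q := f)
      have h4 := natDegree_mul_le (p := (X - C t0 : Polynomial ℝ)) (q := (X - C t0 : Polynomial ℝ))
      have h5 : (X - C t0 : Polynomial ℝ).natDegree = 1 := natDegree_X_sub_C t0
      omega
    · rcases hf4 with rfl | hf4
      · left; simp
      · right
        have := natDegree_mul_le (p := (X - C t0 : Polynomial ℝ) * (X - C t0)) (q := h)
        have h4 := natDegree_mul_le (p := (X - C t0 : Polynomial ℝ)) (q := (X - C t0 : Polynomial ℝ))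
        have h5 : (X - C t0 : Polynomial ℝ).natDegree = 1 := natDegree_X_sub_C t0
        omega
    · rw [hq', hf5]; ring

theorem nonneg_on_Icc_iff_sos_representation (d : ℕ) (p : Polynomial ℝ)
    (hdeg : p.natDegree ≤ d) :
    (∀ t ∈ Set.Icc (-1 : ℝ) 1, 0 ≤ p.eval t) ↔
      ∃ f h : Polynomial ℝ, IsSumSq f ∧ IsSumSq h ∧
        f.natDegree ≤ 2 * d ∧ h.natDegree ≤ 2 * d - 2 ∧
        p = f + (1 - Polynomial.X) * (1 + Polynomial.X) * h := by
  constructor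
  · intro hpos
    obtain ⟨f, h, h1, h2, h3, h4, h5⟩ := fml_main d p hdeg hpos
    refine ⟨f, h, h1, h2, h3, ?_, h5⟩
    rcases h4 with rfl | h4
    · simp
    · omega
  · rintro ⟨f, h, hf, hh, _, _, rfl⟩ t ht
    simp only [eval_add, eval_mul, eval_sub, eval_one, eval_X]
    have h1 : (0:ℝ) ≤ 1 - t := by linarith [ht.2]
    have h2 : (0:ℝ) ≤ 1 + t := by linarith [ht.1]
    exact add_nonneg (fml_eval_nonneg hf t)
      (mul_nonneg (mul_nonneg h1 h2) (fml_eval_nonneg hh t))
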